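/- Let Γ be a finite group, N ⊴ Γ, K algebraically closed with char(K) ∤ |Γ|, ♮ a 2-cocycle of Γ/N, and π ∈ Irr_K(N) with isotropy group Γ_π and cocycle κ_π. For any K[Γ,♮]-module V there is a natural K-linear isomorphism Hom_{K[Γ,♮]}( ind_{K[Γ_π,♮]}^{K[Γ,♮]}(M ⊗ V_π), V ) ≅ Hom_{K[Γ_π/N, ♮κ_π]}( M, Hom_N(V_π, V) ), where M is any K[Γ_π/N, ♮κ_π]-module, K[Γ_π,♮] acts on M ⊗ V_π by S_γ(m⊗v) = τ(T_{γN})m ⊗ I^γ(v), and K[Γ_π/N, ♮κ_π] acts on Hom_N(V_π,V) through the identification Hom_N(V_π, ind_{K[N]}^{K[Γ_π,♮]}V_π) ≅ K[Γ_π/N, ♮κ_π]. -/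

import Mathlib

open scoped TensorProduct

/-- The action of the basis element `S_γ` of `K[Γ,♮]` on the induced module
`ind_{K[Γ_π,♮]}^{K[Γ,♮]}(M ⊗ V_π)`, realized on `(Γ ⧸ Γ_π) →₀ (M ⊗ V)`:
`S_γ · (S_{s(c)} ⊗ x) = ♮(γ, s(c)) ♮(s(γ̄c), g')⁻¹ (S_{s(γ̄c)} ⊗ (τ(g') ⊗ I^{g'}) x)` where
`g' = s(γ̄c)⁻¹ γ s(c) ∈ Γ_π`. -/
noncomputable def inducedAction {K Γ : Type*} [Field K] [Group Γ]
    {V M : Type*} [AddCommGroup V] [Module K V] [AddCommGroup M] [Module K M]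
    (Γπ : Subgroup Γ) (nat : Γ → Γ → Kˣ)
    (τ : Γ → M →ₗ[K] M) (I : Γ → V →ₗ[K] V) (s : Γ ⧸ Γπ → Γ) (γ : Γ) :
    ((Γ ⧸ Γπ) →₀ (M ⊗[K] V)) →ₗ[K] ((Γ ⧸ Γπ) →₀ (M ⊗[K] V)) :=
  Finsupp.lsum K fun c : Γ ⧸ Γπ =>
    (Finsupp.lsingle (γ • c)).comp
      ((((nat γ (s c) : K) * ((nat (s (γ • c)) ((s (γ • c))⁻¹ * γ * s c) : K))⁻¹)) •
        TensorProduct.map (τ ((s (γ • c))⁻¹ * γ * s c)) (I ((s (γ • c))⁻¹ * γ * s c)))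

/-- Clifford theory with twisting: `Γ` finite, `N ⊴ Γ`, `K` algebraically
closed with `char K ∤ |Γ|`, `π ∈ Irr_K(N)` with isotropy group `Γ_π`, normalized intertwiners
`I^γ` with 2-cocycle `κ_π`, and `♮` a 2-cocycle of `Γ/N`.  For any `K[Γ,♮]`-module `W` (with
action `ρ`), and any `K[Γ_π/N, ♮κ_π]`-module `M` (with action `τ`), there is a natural
`K`-linear isomorphism
`Hom_{K[Γ,♮]}( ind_{K[Γ_π,♮]}^{K[Γ,♮]}(M ⊗ V_π), W ) ≅ Hom_{K[Γ_π/N, ♮κ_π]}( M, Hom_N(V_π, W) )`,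
sending `Φ` to `F` with `F(m)(v) = Φ(S_1 ⊗ m ⊗ v)`.  This is expressed below as: for every
equivariant `Φ`, the associated `F` is `N`-equivariant in `v` and `♮κ_π`-equivariant in `m`
(first clause); the assignment `Φ ↦ F` is injective (second clause); and every such `F` arises
from a unique equivariant `Φ` (third clause). -/
theorem frobenius_reciprocity_twisted
    {K : Type*} [Field K] [IsAlgClosed K]
    {Γ : Type*} [Group Γ] [Fintype Γ]
    (hchar : (Fintype.card Γ : K) ≠ 0)
    (N : Subgroup Γ) [N.Normal]
    {V M W : Type*} [AddCommGroup V] [Module K V] [AddCommGroup M] [Module K M]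
    [AddCommGroup W] [Module K W]
    (π : Γ → V →ₗ[K] V)
    (hrep : ∀ n ∈ N, ∀ n' ∈ N, π (n * n') = π n ∘ₗ π n')
    (hone : π 1 = LinearMap.id)
    (hnontriv : Nontrivial V)
    (hirr : ∀ U : Submodule K V, (∀ n ∈ N, ∀ v ∈ U, π n v ∈ U) → U = ⊥ ∨ U = ⊤)
    (Γπ : Subgroup Γ) (hNle : N ≤ Γπ)
    (hstab : ∀ γ : Γ, γ ∈ Γπ ↔
      ∃ e : V ≃ₗ[K] V, ∀ n ∈ N,
        (e : V →ₗ[K] V) ∘ₗ π (γ⁻¹ * n * γ) = π n ∘ₗ (e : V →ₗ[K] V))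
    (I : Γ → V →ₗ[K] V)
    (hIbij : ∀ γ ∈ Γπ, Function.Bijective (I γ))
    (hI : ∀ γ ∈ Γπ, ∀ n ∈ N, I γ ∘ₗ π (γ⁻¹ * n * γ) = π n ∘ₗ I γ)
    (hI1 : I 1 = LinearMap.id)
    (hIN : ∀ n ∈ N, I n = π n)
    (κ : Γ → Γ → Kˣ)
    (hκ : ∀ γ ∈ Γπ, ∀ γ' ∈ Γπ, I (γ * γ') = (κ γ γ' : K) • (I γ ∘ₗ I γ'))
    (nat : Γ → Γ → Kˣ)
    (hnat_cocycle : ∀ γ₁ γ₂ γ₃ : Γ,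
      nat γ₁ (γ₂ * γ₃) * nat γ₂ γ₃ = nat γ₁ γ₂ * nat (γ₁ * γ₂) γ₃)
    (hnat_factors : ∀ γ γ' : Γ, ∀ n ∈ N, nat (γ * n) γ' = nat γ γ' ∧ nat γ (γ' * n) = nat γ γ')
    (hnat_one : nat 1 1 = 1)
    (τ : Γ → M →ₗ[K] M)
    (hτ : ∀ γ ∈ Γπ, ∀ γ' ∈ Γπ,
      τ γ ∘ₗ τ γ' = ((nat γ γ' : K) * (κ γ γ' : K)) • τ (γ * γ'))
    (hτN : ∀ γ ∈ Γπ, ∀ n ∈ N, τ (γ * n) = τ γ)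
    (hτ1 : τ 1 = LinearMap.id)
    (ρ : Γ → W →ₗ[K] W)
    (hρ : ∀ γ γ' : Γ, ρ γ ∘ₗ ρ γ' = (nat γ γ' : K) • ρ (γ * γ'))
    (hρ1 : ρ 1 = LinearMap.id)
    (s : Γ ⧸ Γπ → Γ)
    (hs : ∀ c : Γ ⧸ Γπ, (QuotientGroup.mk (s c) : Γ ⧸ Γπ) = c)
    (hs1 : s (QuotientGroup.mk (1 : Γ)) = 1) :
    -- (i) for equivariant `Φ`, the map `F(m)(v) = Φ(S_1 ⊗ m ⊗ v)` lands in
    -- `Hom_{K[Γ_π/N,♮κ_π]}(M, Hom_N(V_π, W))`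
    (∀ Φ : ((Γ ⧸ Γπ) →₀ (M ⊗[K] V)) →ₗ[K] W,
      (∀ γ : Γ, Φ ∘ₗ inducedAction Γπ nat τ I s γ = ρ γ ∘ₗ Φ) →
      (∀ (m : M) (v : V), ∀ n ∈ N,
          Φ (Finsupp.single (QuotientGroup.mk (1 : Γ)) (m ⊗ₜ[K] (π n v)))
            = ρ n (Φ (Finsupp.single (QuotientGroup.mk (1 : Γ)) (m ⊗ₜ[K] v)))) ∧
      (∀ γ ∈ Γπ, ∀ (m : M) (v : V),
          Φ (Finsupp.single (QuotientGroup.mk (1 : Γ)) ((τ γ m) ⊗ₜ[K] (I γ v)))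
            = ρ γ (Φ (Finsupp.single (QuotientGroup.mk (1 : Γ)) (m ⊗ₜ[K] v))))) ∧
    -- (ii) the correspondence `Φ ↦ F` is injective
    (∀ Φ Φ' : ((Γ ⧸ Γπ) →₀ (M ⊗[K] V)) →ₗ[K] W,
      (∀ γ : Γ, Φ ∘ₗ inducedAction Γπ nat τ I s γ = ρ γ ∘ₗ Φ) →
      (∀ γ : Γ, Φ' ∘ₗ inducedAction Γπ nat τ I s γ = ρ γ ∘ₗ Φ') →
      (∀ (m : M) (v : V),
        Φ (Finsupp.single (QuotientGroup.mk (1 : Γ)) (m ⊗ₜ[K] v))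
          = Φ' (Finsupp.single (QuotientGroup.mk (1 : Γ)) (m ⊗ₜ[K] v))) →
      Φ = Φ') ∧
    -- (iii) and surjective
    (∀ F : M →ₗ[K] (V →ₗ[K] W),
      (∀ (m : M) (v : V), ∀ n ∈ N, F m (π n v) = ρ n (F m v)) →
      (∀ γ ∈ Γπ, ∀ (m : M) (v : V), F (τ γ m) (I γ v) = ρ γ (F m v)) →
      ∃ Φ : ((Γ ⧸ Γπ) →₀ (M ⊗[K] V)) →ₗ[K] W,
        (∀ γ : Γ, Φ ∘ₗ inducedAction Γπ nat τ I s γ = ρ γ ∘ₗ Φ) ∧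
        ∀ (m : M) (v : V),
          F m v = Φ (Finsupp.single (QuotientGroup.mk (1 : Γ)) (m ⊗ₜ[K] v))) := by
  classical
  -- `nat` is normalized at 1 on both sides
  have hnatr : ∀ γ : Γ, nat γ 1 = 1 := by
    intro γ
    have h := hnat_cocycle γ 1 1
    simp only [mul_one, hnat_one] at h
    exact left_eq_mul.mp h
  have hnatl : ∀ γ : Γ, nat 1 γ = 1 := by
    intro γ
    have h := hnat_cocycle 1 1 γ
    simp only [one_mul, hnat_one] at h
    exact mul_eq_right.mp h
  -- τ is trivial on N
  have hτN' : ∀ n ∈ N, τ n = LinearMap.id := by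
    intro n hn
    have h := hτN 1 (one_mem _) n hn
    rwa [one_mul, hτ1] at h
  -- the "return" element lies in Γπ
  have hg' : ∀ (γ : Γ) (c : Γ ⧸ Γπ), (s (γ • c))⁻¹ * γ * s c ∈ Γπ := by
    intro γ c
    have h1 : (QuotientGroup.mk (s (γ • c)) : Γ ⧸ Γπ) = QuotientGroup.mk (γ * s c) := by
      rw [hs]
      conv_lhs => rw [← hs c]
      rfl
    have h2 := QuotientGroup.eq.mp h1
    rwa [← mul_assoc] at h2
  -- explicit formula for the induced action on a single
  have hact : ∀ (γ : Γ) (c : Γ ⧸ Γπ) (x : M ⊗[K] V),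
      inducedAction Γπ nat τ I s γ (Finsupp.single c x)
        = Finsupp.single (γ • c)
            ((((nat γ (s c) : K) * ((nat (s (γ • c)) ((s (γ • c))⁻¹ * γ * s c) : K))⁻¹)) •
              TensorProduct.map (τ ((s (γ • c))⁻¹ * γ * s c))
                (I ((s (γ • c))⁻¹ * γ * s c)) x) := by
    intro γ c x
    simp [inducedAction, Finsupp.lsum_single]
  -- key transport: an equivariant Φ is determined by its values at the identity coset
  have key : ∀ (Φ : ((Γ ⧸ Γπ) →₀ (M ⊗[K] V)) →ₗ[K] W),
      (∀ γ : Γ, Φ ∘ₗ inducedAction Γπ nat τ I s γ = ρ γ ∘ₗ Φ) →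
      ∀ (c : Γ ⧸ Γπ) (x : M ⊗[K] V),
        Φ (Finsupp.single c x)
          = ρ (s c) (Φ (Finsupp.single (QuotientGroup.mk (1 : Γ)) x)) := by
    intro Φ hΦ c x
    have h := LinearMap.congr_fun (hΦ (s c))
      (Finsupp.single (QuotientGroup.mk (1 : Γ)) x)
    have hc : (s c) • (QuotientGroup.mk (1 : Γ) : Γ ⧸ Γπ) = c := by
      have : (s c) • (QuotientGroup.mk (1 : Γ) : Γ ⧸ Γπ)
          = QuotientGroup.mk (s c * 1) := rfl
      rw [this, mul_one, hs]
    rw [LinearMap.comp_apply, LinearMap.comp_apply, hact, hc, hs1] at h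
    simpa [hτ1, hI1, hnatr] using h
  -- the equivariance at elements of Γπ applied to the identity coset
  have keyπ : ∀ (Φ : ((Γ ⧸ Γπ) →₀ (M ⊗[K] V)) →ₗ[K] W),
      (∀ γ : Γ, Φ ∘ₗ inducedAction Γπ nat τ I s γ = ρ γ ∘ₗ Φ) →
      ∀ γ ∈ Γπ, ∀ (m : M) (v : V),
        Φ (Finsupp.single (QuotientGroup.mk (1 : Γ)) ((τ γ m) ⊗ₜ[K] (I γ v)))
          = ρ γ (Φ (Finsupp.single (QuotientGroup.mk (1 : Γ)) (m ⊗ₜ[K] v))) := by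
    intro Φ hΦ γ hγ m v
    have h := LinearMap.congr_fun (hΦ γ)
      (Finsupp.single (QuotientGroup.mk (1 : Γ)) (m ⊗ₜ[K] v))
    have hc : γ • (QuotientGroup.mk (1 : Γ) : Γ ⧸ Γπ) = QuotientGroup.mk (1 : Γ) := by
      have : γ • (QuotientGroup.mk (1 : Γ) : Γ ⧸ Γπ)
          = QuotientGroup.mk (γ * 1) := rfl
      rw [this, mul_one]
      exact QuotientGroup.eq.mpr (by simpa using inv_mem hγ)
    rw [LinearMap.comp_apply, LinearMap.comp_apply, hact, hc, hs1] at h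
    simpa [hnatr, hnatl] using h
  refine ⟨?_, ?_, ?_⟩
  · -- (i)
    intro Φ hΦ
    refine ⟨?_, keyπ Φ hΦ⟩
    intro m v n hn
    have h := keyπ Φ hΦ n (hNle hn) m v
    rwa [hτN' n hn, hIN n hn, LinearMap.id_apply] at h
  · -- (ii)
    intro Φ Φ' hΦ hΦ' hagree
    have hx : ∀ x : M ⊗[K] V,
        Φ (Finsupp.single (QuotientGroup.mk (1 : Γ)) x)
          = Φ' (Finsupp.single (QuotientGroup.mk (1 : Γ)) x) := by
      intro x
      induction x using TensorProduct.induction_on with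
      | zero => simp
      | tmul m v => exact hagree m v
      | add x y hx hy => rw [Finsupp.single_add, map_add, map_add, hx, hy]
    apply Finsupp.lhom_ext
    intro c x
    rw [key Φ hΦ c x, key Φ' hΦ' c x, hx x]
  · -- (iii)
    intro F hFN hFΓ
    set Φ : ((Γ ⧸ Γπ) →₀ (M ⊗[K] V)) →ₗ[K] W :=
      Finsupp.lsum K (fun c => (ρ (s c)) ∘ₗ TensorProduct.lift F) with hΦdef
    have hΦapp : ∀ (d : Γ ⧸ Γπ) (y : M ⊗[K] V),
        Φ (Finsupp.single d y) = ρ (s d) (TensorProduct.lift F y) := by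
      intro d y
      simp [hΦdef, Finsupp.lsum_single]
    refine ⟨Φ, ?_, ?_⟩
    · intro γ
      apply Finsupp.lhom_ext'
      intro c
      apply TensorProduct.ext'
      intro m v
      simp only [LinearMap.comp_apply, Finsupp.lsingle_apply]
      rw [hact, ← Finsupp.smul_single, map_smul, hΦapp, hΦapp, TensorProduct.map_tmul, TensorProduct.lift.tmul,
        TensorProduct.lift.tmul, hFΓ _ (hg' γ c) m v]
      have h1 := LinearMap.congr_fun (hρ (s (γ • c)) ((s (γ • c))⁻¹ * γ * s c)) (F m v)
      have h2 := LinearMap.congr_fun (hρ γ (s c)) (F m v)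
      rw [LinearMap.comp_apply, LinearMap.smul_apply] at h1 h2
      have hmul : s (γ • c) * ((s (γ • c))⁻¹ * γ * s c) = γ * s c := by group
      rw [h1, h2, hmul, smul_smul, mul_assoc,
        inv_mul_cancel₀ (Units.ne_zero _), mul_one]
    · intro m v
      rw [hΦapp, TensorProduct.lift.tmul, hs1, hρ1, LinearMap.id_apply]
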